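/- Let s : ℝ → ℝ be continuous on [1, ∞), differentiable on (1, ∞), with s(u) > 0 for all u ≥ 1 and s(k) − k·s'(k) > 0 for all k > 1; suppose f(k) := s'(k)/(s(k) − k·s'(k)) is strictly decreasing on (1, ∞). Let r, c > 0 and suppose there exists k* > 1 with f(k*) = r/c. Then for every u ∈ [1, ∞) with u ≠ k*, one has (r·u + c)/s(u) > (r·k* + c)/s(k*); i.e., φ(u) := (r·u + c)/s(u) attains its unique global minimum over [1, ∞) at u = k*. -/

import Mathlib

/-- Low service cost case: if `f k* = r/c` for some `k* > 1`, then
`φ u := (r·u + c)/s u` attains its unique global minimum over `[1, ∞)` at `u = k*`. -/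
theorem stmt_8 (s s' : ℝ → ℝ)
    (hcont : ContinuousOn s (Set.Ici (1 : ℝ)))
    (hderiv : ∀ k > (1 : ℝ), HasDerivAt s (s' k) k)
    (hpos : ∀ u ≥ (1 : ℝ), 0 < s u)
    (hden : ∀ k > (1 : ℝ), 0 < s k - k * s' k)
    (hf : StrictAntiOn (fun k => s' k / (s k - k * s' k)) (Set.Ioi (1 : ℝ)))
    (r c : ℝ) (hr : 0 < r) (hc : 0 < c)
    (kstar : ℝ) (hkstar : 1 < kstar)
    (hfk : s' kstar / (s kstar - kstar * s' kstar) = r / c) :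
    ∀ u ≥ (1 : ℝ), u ≠ kstar →
      (r * u + c) / s u > (r * kstar + c) / s kstar := by
  set φ : ℝ → ℝ := fun u => (r * u + c) / s u with hφ
  have hφcont : ContinuousOn φ (Set.Ici (1 : ℝ)) := by
    apply ContinuousOn.div
    · exact (continuous_const.mul continuous_id |>.add continuous_const).continuousOn
    · exact hcont
    · intro x hx; exact (hpos x hx).ne'
  have hφderiv : ∀ x > (1 : ℝ), HasDerivAt φ
      ((r * s x - (r * x + c) * s' x) / s x ^ 2) x := by
    intro x hx
    have h1 : HasDerivAt (fun u : ℝ => r * u + c) r x := by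
      simpa using ((hasDerivAt_id x).const_mul r).add_const c
    exact h1.div (hderiv x hx) (hpos x hx.le).ne'
  -- sign of the numerator
  have hsign : ∀ x > (1 : ℝ), x < kstar → r * s x - (r * x + c) * s' x < 0 := by
    intro x hx hxk
    have hfx : r / c < s' x / (s x - x * s' x) := by
      rw [← hfk]; exact hf (Set.mem_Ioi.mpr hx) (Set.mem_Ioi.mpr hkstar) hxk
    have := (div_lt_div_iff₀ hc (hden x hx)).mp hfx
    nlinarith
  have hsign' : ∀ x > (1 : ℝ), kstar < x → 0 < r * s x - (r * x + c) * s' x := by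
    intro x hx hxk
    have hfx : s' x / (s x - x * s' x) < r / c := by
      rw [← hfk]; exact hf (Set.mem_Ioi.mpr hkstar) (Set.mem_Ioi.mpr hx) hxk
    have := (div_lt_div_iff₀ (hden x hx) hc).mp hfx
    nlinarith
  intro u hu hne
  rcases lt_or_gt_of_ne hne with hlt | hgt
  · -- u < kstar : φ strictly anti on [1, kstar]
    have hanti : StrictAntiOn φ (Set.Icc 1 kstar) := by
      apply strictAntiOn_of_deriv_neg (convex_Icc 1 kstar)
        (hφcont.mono (Set.Icc_subset_Ici_self))
      intro x hx
      rw [interior_Icc] at hx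
      rw [(hφderiv x hx.1).deriv]
      exact div_neg_of_neg_of_pos (hsign x hx.1 hx.2) (pow_pos (hpos x hx.1.le) 2)
    exact hanti ⟨hu, hlt.le⟩ ⟨hkstar.le, le_refl _⟩ hlt
  · -- kstar < u : φ strictly mono on [kstar, ∞)
    have hmono : StrictMonoOn φ (Set.Ici kstar) := by
      apply strictMonoOn_of_deriv_pos (convex_Ici kstar)
        (hφcont.mono (Set.Ici_subset_Ici.mpr hkstar.le))
      intro x hx
      rw [interior_Ici] at hx
      have hx1 : 1 < x := hkstar.trans hx
      rw [(hφderiv x hx1).deriv]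
      exact div_pos (hsign' x hx1 hx) (pow_pos (hpos x hx1.le) 2)
    exact hmono (Set.mem_Ici.mpr (le_refl kstar)) hgt.le hgt
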